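/- Functional elimination of vertices commutes: for a finite DAG G and two distinct vertices X and Y, eliminating X and then Y yields the same DAG as eliminating Y and then X, where eliminating a vertex V means adding an edge from every parent of V to every child of V (among remaining vertices) and then removing V. -/
import Mathlib


/-- Functional elimination of a vertex `X` from a digraph: add an edge from each
parent of `X` to each child of `X` (among remaining vertices), then delete `X`. -/
def elimVertex {V : Type*} (E : V → V → Prop) (X : V) : V → V → Prop :=
  fun a b => a ≠ X ∧ b ≠ X ∧ (E a b ∨ (E a X ∧ E X b))

/-- For a finite DAG and distinct vertices `X`, `Y`, eliminating `X`
and then `Y` yields the same DAG as eliminating `Y` and then `X`. -/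
theorem elimVertex_comm {V : Type*} [Fintype V] (E : V → V → Prop) (X Y : V)
    (hG : ∀ v, ¬ Relation.TransGen E v v) (hXY : X ≠ Y) :
    ∀ a b, elimVertex (elimVertex E X) Y a b ↔ elimVertex (elimVertex E Y) X a b := by
  have h1 : ¬(E X Y ∧ E Y X) := fun ⟨h, h'⟩ =>
    hG X (Relation.TransGen.tail (Relation.TransGen.single h) h')
  intro a b
  simp only [elimVertex]
  tauto
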